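/- arXiv:1002.4262 — 2 statements merged into one kernel-verified Lean document; each statement's English description precedes it below -/
import Mathlib

section
/- Let U ⊆ ℂ be an open set and let (f_k) be a sequence of injective holomorphic functions f_k : U → ℂ converging locally uniformly to an injective holomorphic function f. Then every compact subset K of f(U) is eventually contained in f_k(U), i.e. there exists m such that K ⊆ f_k(U) for all k ≥ m. -/
open Metric Set Filter

/-- One-variable case: if injective holomorphic functions `f_k : U → ℂ` converge locally
uniformly to an injective holomorphic `f`, then every compact `K ⊆ f(U)` is eventually
contained in `f_k(U)`. -/
theorem stmt2 {U : Set ℂ} (hU : IsOpen U)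
    (f : ℕ → ℂ → ℂ) (F : ℂ → ℂ)
    (hf_hol : ∀ k, DifferentiableOn ℂ (f k) U)
    (hf_inj : ∀ k, Set.InjOn (f k) U)
    (hF_hol : DifferentiableOn ℂ F U)
    (hF_inj : Set.InjOn F U)
    (hconv : TendstoLocallyUniformlyOn f F atTop U)
    (K : Set ℂ) (hK : IsCompact K) (hKF : K ⊆ F '' U) :
    ∃ m : ℕ, ∀ k ≥ m, K ⊆ f k '' U := by
  -- main claim: around every point of K there is a ball eventually contained in f k '' U
  have claim : ∀ w₀ ∈ K, ∃ ε > 0, ∀ᶠ k in atTop, ball w₀ ε ⊆ f k '' U := by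
    intro w₀ hw₀
    obtain ⟨z₀, hz₀U, hz₀⟩ := hKF hw₀
    obtain ⟨r, hr, hrU⟩ : ∃ r > 0, closedBall z₀ r ⊆ U := by
      obtain ⟨r, hr, hrU⟩ := Metric.isOpen_iff.1 hU z₀ hz₀U
      exact ⟨r / 2, by positivity, fun z hz =>
        hrU (lt_of_le_of_lt (mem_closedBall.1 hz) (by linarith))⟩
    have hsph : sphere z₀ r ⊆ U := fun z hz => hrU (sphere_subset_closedBall hz)
    -- minimum of ‖F z - w₀‖ on the sphere
    have hcont : ContinuousOn (fun z => ‖F z - w₀‖) (sphere z₀ r) :=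
      (((hF_hol.continuousOn.mono hsph).sub continuousOn_const).norm)
    obtain ⟨x, hx, hmin'⟩ := (isCompact_sphere z₀ r).exists_isMinOn
      (NormedSpace.sphere_nonempty.2 hr.le) hcont
    have hmin : ∀ z ∈ sphere z₀ r, ‖F x - w₀‖ ≤ ‖F z - w₀‖ := fun z hz => hmin' hz
    set ε : ℝ := ‖F x - w₀‖ with hε
    have hxz₀ : x ≠ z₀ := by
      intro h; rw [h, mem_sphere, dist_self] at hx; exact hr.ne' hx.symm
    have hεpos : 0 < ε := by
      rw [hε, norm_pos_iff, sub_ne_zero, ← hz₀]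
      exact fun h => hxz₀ (hF_inj (hsph hx) hz₀U h)
    refine ⟨ε / 4, by positivity, ?_⟩
    -- uniform convergence on the closed ball
    have huc : TendstoUniformlyOn f F atTop (closedBall z₀ r) :=
      (tendstoLocallyUniformlyOn_iff_forall_isCompact hU).1 hconv _ hrU
        (isCompact_closedBall z₀ r)
    have hev : ∀ᶠ k in atTop, ∀ z ∈ closedBall z₀ r, dist (F z) (f k z) < ε / 4 :=
      (Metric.tendstoUniformlyOn_iff.1 huc) (ε / 4) (by positivity)
    filter_upwards [hev] with k hk w hw
    by_contra hwk
    have hne : ∀ z ∈ closedBall z₀ r, f k z - w ≠ 0 := by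
      intro z hz h
      exact hwk ⟨z, hrU hz, by rwa [sub_eq_zero] at h⟩
    set h : ℂ → ℂ := fun z => (f k z - w)⁻¹ with hh
    have hdc : DiffContOnCl ℂ h (ball z₀ r) := by
      constructor
      · exact (((hf_hol k).mono (ball_subset_closedBall.trans hrU)).sub
          (differentiableOn_const w)).inv (fun z hz => hne z (ball_subset_closedBall hz))
          |>.mono (by simp)
      · rw [closure_ball z₀ hr.ne']
        exact (((hf_hol k).continuousOn.mono hrU).sub continuousOn_const).inv₀ hne
    -- bound on the frontier
    have hfr : ∀ z ∈ frontier (ball z₀ r), ‖h z‖ ≤ 2 / ε := by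
      rw [frontier_ball z₀ hr.ne']
      intro z hz
      have h1 : ε ≤ ‖F z - w₀‖ := hmin z hz
      have h2 : ‖F z - f k z‖ < ε / 4 := by
        have := hk z (sphere_subset_closedBall hz); rwa [dist_eq_norm] at this
      have h3 : ‖w - w₀‖ < ε / 4 := by
        rw [← dist_eq_norm]; exact mem_ball.1 hw
      have key : ε / 2 ≤ ‖f k z - w‖ := by
        have : F z - w₀ = (f k z - w) + (F z - f k z) + (w - w₀) := by ring
        have hb : ‖F z - w₀‖ ≤ ‖f k z - w‖ + ‖F z - f k z‖ + ‖w - w₀‖ := by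
          rw [this]
          exact (norm_add_le _ _).trans (by gcongr; exact norm_add_le _ _)
        linarith
      rw [hh]
      simp only [norm_inv]
      have hnz : (0:ℝ) < ‖f k z - w‖ := lt_of_lt_of_le (by positivity) key
      calc ‖f k z - w‖⁻¹ ≤ (ε / 2)⁻¹ := by
            rw [inv_le_inv₀ hnz (by positivity)]; exact key
        _ = 2 / ε := by rw [inv_div]
    have hz₀cl : z₀ ∈ closure (ball z₀ r) := by
      rw [closure_ball z₀ hr.ne']; exact mem_closedBall_self hr.le
    have := Complex.norm_le_of_forall_mem_frontier_norm_le isBounded_ball hdc hfr hz₀cl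
    -- contradiction: ‖h z₀‖ is large
    have hsmall : ‖f k z₀ - w‖ < ε / 2 := by
      have h2 : ‖F z₀ - f k z₀‖ < ε / 4 := by
        have := hk z₀ (mem_closedBall_self hr.le); rwa [dist_eq_norm] at this
      have h3 : ‖w - w₀‖ < ε / 4 := by rw [← dist_eq_norm]; exact mem_ball.1 hw
      calc ‖f k z₀ - w‖ = ‖-(F z₀ - f k z₀) - (w - w₀)‖ := by rw [hz₀]; ring_nf
        _ ≤ ‖F z₀ - f k z₀‖ + ‖w - w₀‖ := (norm_sub_le _ _).trans (by rw [norm_neg])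
        _ < ε / 2 := by linarith
    have hpos : (0:ℝ) < ‖f k z₀ - w‖ :=
      norm_pos_iff.2 (hne z₀ (mem_closedBall_self hr.le))
    rw [hh] at this
    simp only [norm_inv] at this
    have hfin : (1:ℝ) ≤ 2 / ε * ‖f k z₀ - w‖ := by
      calc (1:ℝ) = ‖f k z₀ - w‖⁻¹ * ‖f k z₀ - w‖ := (inv_mul_cancel₀ hpos.ne').symm
        _ ≤ 2 / ε * ‖f k z₀ - w‖ := mul_le_mul_of_nonneg_right this hpos.le
    have hlt : 2 / ε * ‖f k z₀ - w‖ < 2 / ε * (ε / 2) :=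
      mul_lt_mul_of_pos_left hsmall (by positivity)
    have heq : 2 / ε * (ε / 2) = 1 := by field_simp
    linarith
  -- extract finite subcover
  choose ε hεpos hεev using claim
  obtain ⟨t, ht⟩ := hK.elim_nhds_subcover' (fun w hw => ball w (ε w hw))
    (fun w hw => ball_mem_nhds w (hεpos w hw))
  have hev : ∀ᶠ k in atTop, ∀ w ∈ t, ball (w : ℂ) (ε w w.2) ⊆ f k '' U :=
    (eventually_all_finset t).2 fun w _ => hεev w w.2
  obtain ⟨m, hm⟩ := eventually_atTop.1 hev
  exact ⟨m, fun k hk w hw => by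
    obtain ⟨x, hx, hxw⟩ := mem_iUnion₂.1 (ht hw)
    exact hm k hk x hx hxw⟩
end

section
/- Let (φ_{s,t}) be a family of injective holomorphic self-maps of the unit disc 𝔻 satisfying the evolution property, and define Φ_{s,t} : 𝔹ⁿ → ℂⁿ by Φ_{s,t}(z₁, z̃) = (φ_{s,t}(z₁), z̃ e^{(s−t)/2} √(φ_{s,t}'(z₁))), where a holomorphic branch of the square root of φ_{s,t}' is chosen. Then for every z = (z₁, z̃) ∈ 𝔹ⁿ and t ≥ s ≥ 0, ‖Φ_{s,t}(z)‖ < 1; that is, Φ_{s,t} maps 𝔹ⁿ into 𝔹ⁿ. -/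
open Metric Set

noncomputable def mob (a z : ℂ) : ℂ := (z + a) / (1 + (starRingEnd ℂ) a * z)

lemma mob_den_ne {a z : ℂ} (ha : ‖a‖ < 1) (hz : ‖z‖ < 1) :
    1 + (starRingEnd ℂ) a * z ≠ 0 := by
  intro h
  have h1 : ‖(starRingEnd ℂ) a * z‖ < 1 := by
    rw [norm_mul, Complex.norm_conj]
    calc ‖a‖ * ‖z‖ ≤ ‖a‖ * 1 :=
      mul_le_mul_of_nonneg_left hz.le (norm_nonneg _)
    _ < 1 := by simpa using ha
  have h2 : (starRingEnd ℂ) a * z = -1 := by linear_combination h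
  rw [h2] at h1; simp at h1

lemma normSq_identity (a z : ℂ) :
    Complex.normSq (1 + (starRingEnd ℂ) a * z) - Complex.normSq (z + a)
      = (1 - Complex.normSq a) * (1 - Complex.normSq z) := by
  simp only [Complex.normSq_apply, Complex.add_re, Complex.add_im, Complex.mul_re,
    Complex.mul_im, Complex.one_re, Complex.one_im, Complex.conj_re, Complex.conj_im]
  ring

lemma mob_mem {a z : ℂ} (ha : ‖a‖ < 1) (hz : z ∈ ball (0:ℂ) 1) :
    mob a z ∈ ball (0:ℂ) 1 := by
  have hz' : ‖z‖ < 1 := by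
    exact mem_ball_zero_iff.1 hz
  rw [mem_ball_zero_iff, mob, norm_div]
  have hd := mob_den_ne ha hz'
  have hdpos : 0 < ‖1 + (starRingEnd ℂ) a * z‖ := by
    simpa [norm_pos_iff] using hd
  rw [div_lt_one hdpos]
  have key : Complex.normSq (z + a) < Complex.normSq (1 + (starRingEnd ℂ) a * z) := by
    have h1 : 0 < (1 - Complex.normSq a) * (1 - Complex.normSq z) := by
      apply mul_pos <;> rw [sub_pos, ← Complex.sq_norm] <;>
        [exact (pow_lt_one₀ (norm_nonneg _) ha two_ne_zero);
         exact (pow_lt_one₀ (norm_nonneg _) hz' two_ne_zero)]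
    nlinarith [normSq_identity a z]
  have h2 := Real.sqrt_lt_sqrt (Complex.normSq_nonneg _) key
  simpa [Complex.norm_def] using h2

lemma mob_hasDerivAt {a z : ℂ} (hne : 1 + (starRingEnd ℂ) a * z ≠ 0) :
    HasDerivAt (mob a) ((1 - a * (starRingEnd ℂ) a) / (1 + (starRingEnd ℂ) a * z) ^ 2) z := by
  have h1 : HasDerivAt (fun w : ℂ => w + a) 1 z := (hasDerivAt_id z).add_const a
  have h2 : HasDerivAt (fun w : ℂ => 1 + (starRingEnd ℂ) a * w) ((starRingEnd ℂ) a) z := by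
    simpa using ((hasDerivAt_id z).const_mul ((starRingEnd ℂ) a)).const_add 1
  have h3 := h1.div h2 hne
  refine HasDerivAt.congr_deriv (f := mob a) h3 ?_
  ring

lemma mob_diffOn {a : ℂ} (ha : ‖a‖ < 1) :
    DifferentiableOn ℂ (mob a) (ball (0:ℂ) 1) := by
  intro z hz
  have hz' : ‖z‖ < 1 := by
    exact mem_ball_zero_iff.1 hz
  exact (mob_hasDerivAt (mob_den_ne ha hz')).differentiableAt.differentiableWithinAt

lemma schwarz_pick {f : ℂ → ℂ} (hd : DifferentiableOn ℂ f (ball 0 1))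
    (hm : MapsTo f (ball (0:ℂ) 1) (ball (0:ℂ) 1)) {a : ℂ} (ha : a ∈ ball (0:ℂ) 1) :
    ‖deriv f a‖ * (1 - ‖a‖ ^ 2) ≤ 1 - ‖f a‖ ^ 2 := by
  set b := f a with hb
  have hb1 : b ∈ ball (0:ℂ) 1 := hm ha
  have ha' : ‖a‖ < 1 := by
    exact mem_ball_zero_iff.1 ha
  have hb' : ‖b‖ < 1 := by
    exact mem_ball_zero_iff.1 hb1
  have hbneg : ‖-b‖ < 1 := by simpa using hb'
  set g : ℂ → ℂ := mob (-b) ∘ f ∘ mob a with hg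
  have hmaps : MapsTo g (ball (0:ℂ) 1) (ball (0:ℂ) 1) := fun z hz =>
    mob_mem hbneg (hm (mob_mem ha' hz))
  have hgd : DifferentiableOn ℂ g (ball (0:ℂ) 1) :=
    ((mob_diffOn hbneg).comp (hd.comp (mob_diffOn ha') (fun z hz => mob_mem ha' hz))
      (fun z hz => hm (mob_mem ha' hz)))
  have hma0 : mob a 0 = a := by simp [mob]
  have hg0 : g 0 = 0 := by
    simp only [hg, Function.comp_apply, hma0, ← hb, mob]
    simp [hb]
  -- derivative computation
  have hda : HasDerivAt (mob a) (1 - a * (starRingEnd ℂ) a) 0 := by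
    have h := mob_hasDerivAt (a := a) (z := 0)
      (by simpa using mob_den_ne ha' (by norm_num : ‖(0:ℂ)‖ < 1))
    simpa using h
  have hdenb : 1 + (starRingEnd ℂ) (-b) * b ≠ 0 := mob_den_ne hbneg hb'
  have hdb : HasDerivAt (mob (-b))
      ((1 - (-b) * (starRingEnd ℂ) (-b)) / (1 + (starRingEnd ℂ) (-b) * b) ^ 2) b :=
    mob_hasDerivAt hdenb
  have hdf : HasDerivAt f (deriv f a) (mob a 0) := by
    rw [hma0]
    exact (hd.differentiableAt (isOpen_ball.mem_nhds ha)).hasDerivAt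
  have h1 : HasDerivAt (f ∘ mob a) (deriv f a * (1 - a * (starRingEnd ℂ) a)) 0 :=
    hdf.comp 0 hda
  have hfm : (f ∘ mob a) 0 = b := by simp [Function.comp, hma0, hb]
  have hdb' : HasDerivAt (mob (-b))
      ((1 - (-b) * (starRingEnd ℂ) (-b)) / (1 + (starRingEnd ℂ) (-b) * b) ^ 2)
      ((f ∘ mob a) 0) := by rw [hfm]; exact hdb
  have hcomp : HasDerivAt g
      (((1 - (-b) * (starRingEnd ℂ) (-b)) / (1 + (starRingEnd ℂ) (-b) * b) ^ 2) *
        (deriv f a * (1 - a * (starRingEnd ℂ) a))) 0 := hdb'.comp 0 h1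
  have hbound : ‖deriv g 0‖ ≤ 1 :=
    Complex.norm_deriv_le_one_of_mapsTo_ball hgd
      (by rw [hg0]; exact hmaps.mono_right ball_subset_closedBall) one_pos
  rw [hcomp.deriv] at hbound
  -- simplify the constant
  have hsq : b * (starRingEnd ℂ) b = ((‖b‖ ^ 2 : ℝ) : ℂ) := by
    rw [Complex.mul_conj']; norm_cast
  have hsqa : a * (starRingEnd ℂ) a = ((‖a‖ ^ 2 : ℝ) : ℂ) := by
    rw [Complex.mul_conj']; norm_cast
  have hden : 1 + (starRingEnd ℂ) (-b) * b = ((1 - ‖b‖ ^ 2 : ℝ) : ℂ) := by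
    rw [map_neg, neg_mul, mul_comm, hsq]; push_cast; ring
  have hnum : 1 - (-b) * (starRingEnd ℂ) (-b) = ((1 - ‖b‖ ^ 2 : ℝ) : ℂ) := by
    rw [map_neg, neg_mul, mul_neg, neg_neg, hsq]; push_cast; ring
  have hbb : (0:ℝ) < 1 - ‖b‖ ^ 2 := by
    nlinarith [norm_nonneg b]
  have haa : (0:ℝ) ≤ 1 - ‖a‖ ^ 2 := by
    nlinarith [norm_nonneg a]
  rw [norm_mul, norm_div, hnum, hden, hsqa] at hbound
  rw [show (1 : ℂ) - ((‖a‖ ^ 2 : ℝ) : ℂ) = ((1 - ‖a‖ ^ 2 : ℝ) : ℂ) by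
    push_cast; ring] at hbound
  rw [norm_mul, Complex.norm_real, Complex.norm_real, norm_pow, Complex.norm_real] at hbound
  rw [Real.norm_eq_abs, Real.norm_eq_abs, _root_.abs_of_pos hbb, _root_.abs_of_nonneg haa] at hbound
  have hsimp : (1 - ‖b‖ ^ 2) / (1 - ‖b‖ ^ 2) ^ 2
      = (1 - ‖b‖ ^ 2)⁻¹ := by
    field_simp
  rw [hsimp] at hbound
  calc ‖deriv f a‖ * (1 - ‖a‖ ^ 2)
      = (1 - ‖b‖ ^ 2) * ((1 - ‖b‖ ^ 2)⁻¹ *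
          (‖deriv f a‖ * (1 - ‖a‖ ^ 2))) := by
        field_simp
    _ ≤ (1 - ‖b‖ ^ 2) * 1 :=
        mul_le_mul_of_nonneg_left hbound hbb.le
    _ = 1 - ‖b‖ ^ 2 := by ring
/-- The Roper–Suffridge type maps `Φ_{s,t}(z₁,z̃) = (φ_{s,t}(z₁), z̃ e^{(s-t)/2}√(φ_{s,t}'(z₁)))`
associated with an evolution family `(φ_{s,t})` of injective holomorphic self-maps of the
unit disc map the unit ball `𝔹ⁿ = {(z₁,z̃) : |z₁|² + ‖z̃‖² < 1}` into itself.
Here `σ s t` is a holomorphic branch of the square root of `φ_{s,t}'`. -/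
theorem stmt11 {m : ℕ} (φ : ℝ → ℝ → ℂ → ℂ) (σ : ℝ → ℝ → ℂ → ℂ)
    (hφ_maps : ∀ s t : ℝ, 0 ≤ s → s ≤ t → Set.MapsTo (φ s t) (ball (0:ℂ) 1) (ball (0:ℂ) 1))
    (hφ_hol : ∀ s t : ℝ, 0 ≤ s → s ≤ t → DifferentiableOn ℂ (φ s t) (ball (0:ℂ) 1))
    (hφ_inj : ∀ s t : ℝ, 0 ≤ s → s ≤ t → Set.InjOn (φ s t) (ball (0:ℂ) 1))
    (hφ_id : ∀ s : ℝ, 0 ≤ s → ∀ z ∈ ball (0:ℂ) 1, φ s s z = z)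
    (hφ_comp : ∀ s u t : ℝ, 0 ≤ s → s ≤ u → u ≤ t →
      ∀ z ∈ ball (0:ℂ) 1, φ s t z = φ u t (φ s u z))
    (hσ_hol : ∀ s t : ℝ, 0 ≤ s → s ≤ t → DifferentiableOn ℂ (σ s t) (ball (0:ℂ) 1))
    (hσ : ∀ s t : ℝ, 0 ≤ s → s ≤ t → ∀ z ∈ ball (0:ℂ) 1, (σ s t z) ^ 2 = deriv (φ s t) z)
    (s t : ℝ) (hs : 0 ≤ s) (hst : s ≤ t)
    (z₁ : ℂ) (zt : EuclideanSpace ℂ (Fin m))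
    (hz : ‖z₁‖ ^ 2 + ‖zt‖ ^ 2 < 1) :
    ‖φ s t z₁‖ ^ 2 +
      ‖(((Real.exp ((s - t) / 2) : ℝ) : ℂ) * σ s t z₁) • zt‖ ^ 2 < 1 := by

  have hz₁' : ‖z₁‖ < 1 := by
    nlinarith [norm_nonneg z₁, sq_nonneg (‖zt‖), norm_nonneg zt]
  have hz₁ : z₁ ∈ ball (0:ℂ) 1 := by
    rw [mem_ball_zero_iff]; exact hz₁'
  have hφb : ‖φ s t z₁‖ < 1 := by
    have h := hφ_maps s t hs hst hz₁
    rw [mem_ball_zero_iff] at h; exact h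
  have hSP := schwarz_pick (hφ_hol s t hs hst) (hφ_maps s t hs hst) hz₁
  have hσ2 : ‖σ s t z₁‖ ^ 2 = ‖deriv (φ s t) z₁‖ := by
    rw [← hσ s t hs hst z₁ hz₁, norm_pow]
  have hexp : Real.exp ((s - t) / 2) ^ 2 = Real.exp (s - t) := by
    rw [sq, ← Real.exp_add]; congr 1; ring
  have hnorm : ‖(((Real.exp ((s - t) / 2) : ℝ) : ℂ) * σ s t z₁) • zt‖ ^ 2
      = Real.exp (s - t) * (‖σ s t z₁‖ ^ 2 * ‖zt‖ ^ 2) := by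
    rw [norm_smul, norm_mul, Complex.norm_real, Real.norm_eq_abs,
      _root_.abs_of_pos (Real.exp_pos _), mul_pow, mul_pow, hexp]
    ring
  rw [hnorm]
  have hA0 : (0:ℝ) ≤ ‖σ s t z₁‖ ^ 2 := sq_nonneg _
  have hP0 : (0:ℝ) < 1 - ‖φ s t z₁‖ ^ 2 := by
    nlinarith [norm_nonneg (φ s t z₁)]
  have hAQ : ‖σ s t z₁‖ ^ 2 * (1 - ‖z₁‖ ^ 2)
      ≤ 1 - ‖φ s t z₁‖ ^ 2 := by rw [hσ2]; exact hSP
  have hN : ‖zt‖ ^ 2 < 1 - ‖z₁‖ ^ 2 := by linarith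
  have hN0 : (0:ℝ) ≤ ‖zt‖ ^ 2 := sq_nonneg _
  have he : Real.exp (s - t) ≤ 1 := Real.exp_le_one_iff.2 (by linarith)
  have he0 : (0:ℝ) < Real.exp (s - t) := Real.exp_pos _
  have key : ‖σ s t z₁‖ ^ 2 * ‖zt‖ ^ 2 < 1 - ‖φ s t z₁‖ ^ 2 := by
    rcases eq_or_lt_of_le hA0 with h | h
    · rw [← h]; simpa using hP0
    · nlinarith
  nlinarith
end
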